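/- Let f : ℝ^n → ℝ be differentiable with L-Lipschitz gradient (L > 0), finite infimum f* = inf_x f(x), and satisfying the Polyak–Łojasiewicz condition with constant μ where 0 < μ ≤ L. Define the gradient-descent iterates x_{k+1} = x_k − (1/L) ∇f(x_k) from any initial point x_0. Then for every K ≥ 0, f(x_K) − f* ≤ (1 − μ/L)^K (f(x_0) − f*); in particular f(x_K) → f* as K → ∞. -/

import Mathlib

open scoped Topology
open InnerProductSpace intervalIntegral

set_option maxHeartbeats 1000000

open scoped Topology
open InnerProductSpace intervalIntegral

lemma descent_lemma {n : ℕ} (f : EuclideanSpace ℝ (Fin n) → ℝ) (hf : Differentiable ℝ f)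
    (L : ℝ) (hL : 0 < L)
    (hlip : ∀ x y, ‖gradient f x - gradient f y‖ ≤ L * ‖x - y‖)
    (a b : EuclideanSpace ℝ (Fin n)) :
    f b ≤ f a + inner ℝ (gradient f a) (b - a) + L / 2 * ‖b - a‖ ^ 2 := by
  set v := b - a with hv
  set c : ℝ → EuclideanSpace ℝ (Fin n) := fun t => a + t • v with hc
  have hgradcont : Continuous (gradient f) := by
    have : LipschitzWith (Real.toNNReal L) (gradient f) := by
      refine LipschitzWith.of_dist_le_mul fun p q => ?_
      simpa [dist_eq_norm, Real.coe_toNNReal L hL.le] using hlip p q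
    exact this.continuous
  have hcc : Continuous c := by continuity
  have hderiv : ∀ t ∈ Set.uIcc (0:ℝ) 1,
      HasDerivAt (fun t => f (c t)) (inner ℝ (gradient f (c t)) v : ℝ) t := by
    intro t _
    have h1 : HasDerivAt c v t := by
      exact (((hasDerivAt_id t).smul_const v).const_add a).congr_deriv (one_smul _ _)
    have h2 := ((hf (c t)).hasFDerivAt).comp_hasDerivAt t h1
    have h3 : fderiv ℝ f (c t) v = (inner ℝ (gradient f (c t)) v : ℝ) := by
      rw [show fderiv ℝ f (c t) = toDual ℝ _ (gradient f (c t)) by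
        rw [gradient]; simp]
      simp [toDual_apply_apply]
    rwa [h3] at h2
  have hcont : Continuous fun t => (inner ℝ (gradient f (c t)) v : ℝ) :=
    (continuous_inner.comp ((hgradcont.comp hcc).prodMk continuous_const))
  have hint : IntervalIntegrable (fun t => (inner ℝ (gradient f (c t)) v : ℝ))
      MeasureTheory.volume 0 1 := hcont.intervalIntegrable 0 1
  have hftc : ∫ t in (0:ℝ)..1, (inner ℝ (gradient f (c t)) v : ℝ) = f (c 1) - f (c 0) :=
    integral_eq_sub_of_hasDerivAt hderiv hint
  have hc0 : c 0 = a := by simp [hc]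
  have hc1 : c 1 = b := by simp [hc, hv]
  have hbound : ∀ t ∈ Set.Icc (0:ℝ) 1,
      (inner ℝ (gradient f (c t)) v : ℝ) ≤ inner ℝ (gradient f a) v + L * t * ‖v‖ ^ 2 := by
    intro t ht
    have : (inner ℝ (gradient f (c t)) v : ℝ) - inner ℝ (gradient f a) v
        = inner ℝ (gradient f (c t) - gradient f a) v := by rw [inner_sub_left]
    have h4 : (inner ℝ (gradient f (c t) - gradient f a) v : ℝ)
        ≤ ‖gradient f (c t) - gradient f a‖ * ‖v‖ := real_inner_le_norm _ _
    have h5 : ‖gradient f (c t) - gradient f a‖ ≤ L * (t * ‖v‖) := by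
      have := hlip (c t) a
      simpa [hc, norm_smul, abs_of_nonneg ht.1] using this
    nlinarith [norm_nonneg v, mul_le_mul_of_nonneg_right h5 (norm_nonneg v)]
  have hint2 : IntervalIntegrable (fun t => inner ℝ (gradient f a) v + L * t * ‖v‖ ^ 2)
      MeasureTheory.volume 0 1 := (continuous_const.add ((continuous_const.mul continuous_id).mul continuous_const)).intervalIntegrable 0 1
  have hmono := integral_mono_on (by norm_num) hint hint2 hbound
  have hval : ∫ t in (0:ℝ)..1, (inner ℝ (gradient f a) v + L * t * ‖v‖ ^ 2 : ℝ)
      = inner ℝ (gradient f a) v + L / 2 * ‖v‖ ^ 2 := by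
    rw [integral_add (continuous_const.intervalIntegrable 0 1)
        (Continuous.intervalIntegrable (by fun_prop) 0 1), integral_const]
    have h6 : (fun t : ℝ => L * t * ‖v‖ ^ 2) = fun t : ℝ => (L * ‖v‖ ^ 2) * t := by
      ext t; ring
    rw [h6, integral_const_mul, integral_id]
    norm_num
    ring
  rw [hftc, hc0, hc1, hval] at hmono
  linarith

/-- **Linear convergence of gradient descent under the PL condition
(Lemma 1).** If `f : ℝ^n → ℝ` is differentiable with `L`-Lipschitz gradient
(`L > 0`), has finite infimum `fstar`, and satisfies the Polyak–Łojasiewicz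
condition with constant `0 < μ ≤ L`, then the gradient descent iterates
`x (k+1) = x k - (1/L) ∇f(x k)` satisfy
`f (x K) - fstar ≤ (1 - μ/L)^K (f (x 0) - fstar)` for every `K`; in particular
`f (x K) → fstar` as `K → ∞`. -/
theorem pl_gradient_descent_converges {n : ℕ}
    (f : EuclideanSpace ℝ (Fin n) → ℝ) (hf : Differentiable ℝ f)
    (L μ fstar : ℝ) (hL : 0 < L) (hμ : 0 < μ) (hμL : μ ≤ L)
    (hlip : ∀ x y, ‖gradient f x - gradient f y‖ ≤ L * ‖x - y‖)
    (hglb : IsGLB (Set.range f) fstar)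
    (hPL : ∀ x, μ * (f x - fstar) ≤ (1 / 2) * ‖gradient f x‖ ^ 2)
    (x : ℕ → EuclideanSpace ℝ (Fin n))
    (hx : ∀ k, x (k + 1) = x k - (1 / L) • gradient f (x k)) :
    (∀ K : ℕ, f (x K) - fstar ≤ (1 - μ / L) ^ K * (f (x 0) - fstar)) ∧
    Filter.Tendsto (fun K => f (x K)) Filter.atTop (𝓝 fstar) := by
  have hstep : ∀ k, f (x (k + 1)) - fstar ≤ (1 - μ / L) * (f (x k) - fstar) := by
    intro k
    set a := x k
    set g := gradient f a with hg
    have hb : x (k + 1) - a = -(1 / L) • g := by rw [hx k]; module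
    have hd := descent_lemma f hf L hL hlip a (x (k + 1))
    rw [hb] at hd
    have hinner : (inner ℝ g ((-(1 / L) : ℝ) • g) : ℝ) = -(1 / L) * ‖g‖ ^ 2 := by
      rw [real_inner_smul_right, real_inner_self_eq_norm_sq]
    have hnorm : ‖(-(1 / L) : ℝ) • g‖ ^ 2 = (1 / L) ^ 2 * ‖g‖ ^ 2 := by
      rw [norm_smul]
      rw [show ‖(-(1/L) : ℝ)‖ = 1/L by rw [norm_neg, Real.norm_eq_abs, abs_of_pos (by positivity)]]
      ring
    rw [hinner, hnorm] at hd
    have hpl := hPL a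
    have hL' : L ≠ 0 := hL.ne'
    have key : f a + -(1 / L) * ‖g‖ ^ 2 + L / 2 * ((1 / L) ^ 2 * ‖g‖ ^ 2)
        = f a - 1 / (2 * L) * ‖g‖ ^ 2 := by
      field_simp
      ring
    have hd' : f (x (k + 1)) ≤ f a - 1 / (2 * L) * ‖g‖ ^ 2 := hd.trans_eq key
    have h2 : μ / L * (f a - fstar) ≤ 1 / (2 * L) * ‖g‖ ^ 2 := by
      have h3 := mul_le_mul_of_nonneg_left hpl (le_of_lt (one_div_pos.mpr hL))
      calc μ / L * (f a - fstar) = 1 / L * (μ * (f a - fstar)) := by ring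
        _ ≤ 1 / L * (1 / 2 * ‖gradient f a‖ ^ 2) := h3
        _ = 1 / (2 * L) * ‖g‖ ^ 2 := by rw [← hg]; ring
    have hexp : (1 - μ / L) * (f a - fstar) = (f a - fstar) - μ / L * (f a - fstar) := by ring
    rw [hexp]
    linarith
  have hmain : ∀ K : ℕ, f (x K) - fstar ≤ (1 - μ / L) ^ K * (f (x 0) - fstar) := by
    intro K
    induction K with
    | zero => simp
    | succ k ih =>
      have hr : 0 ≤ 1 - μ / L := by
        have : μ / L ≤ 1 := (div_le_one hL).mpr hμL
        linarith
      calc f (x (k + 1)) - fstar ≤ (1 - μ / L) * (f (x k) - fstar) := hstep k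
        _ ≤ (1 - μ / L) * ((1 - μ / L) ^ k * (f (x 0) - fstar)) :=
            mul_le_mul_of_nonneg_left ih hr
        _ = (1 - μ / L) ^ (k + 1) * (f (x 0) - fstar) := by ring
  refine ⟨hmain, ?_⟩
  have hlb : ∀ K, 0 ≤ f (x K) - fstar := fun K =>
    sub_nonneg.mpr (hglb.1 ⟨x K, rfl⟩)
  have hr0 : 0 ≤ 1 - μ / L := by
    have : μ / L ≤ 1 := (div_le_one hL).mpr hμL
    linarith
  have hr1 : 1 - μ / L < 1 := by
    have : 0 < μ / L := div_pos hμ hL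
    linarith
  have htend0 : Filter.Tendsto (fun K : ℕ => (1 - μ / L) ^ K * (f (x 0) - fstar))
      Filter.atTop (𝓝 0) := by
    have := (tendsto_pow_atTop_nhds_zero_of_lt_one hr0 hr1).mul_const (f (x 0) - fstar)
    simpa using this
  have hsq : Filter.Tendsto (fun K => f (x K) - fstar) Filter.atTop (𝓝 0) :=
    squeeze_zero hlb hmain htend0
  have := hsq.add_const fstar
  simpa using this
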